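/- For every real x with 0 < x < √2, one has sin x ≤ (2/(2 − x²))·x·cos x (equivalently, tan x/x ≤ 2/(2 − x²)). -/

import Mathlib

open Real

theorem sin_le_ratio (x : ℝ) (hx0 : 0 < x) (hx : x < Real.sqrt 2) :
    Real.sin x ≤ (2 / (2 - x ^ 2)) * x * Real.cos x := by
  have hsqrt : Real.sqrt 2 < 1.5 := by
    rw [show (1.5 : ℝ) = Real.sqrt (1.5 ^ 2) by
      rw [Real.sqrt_sq (by norm_num)]]
    exact Real.sqrt_lt_sqrt (by norm_num) (by norm_num)
  have hx2 : x ^ 2 < 2 := by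
    have := Real.lt_sqrt (le_of_lt hx0) (y := 2)
    exact this.mp hx
  have hpos : 0 < 2 - x ^ 2 := by linarith
  -- f t = 2 t cos t - (2 - t²) sin t is monotone on [0, √2]
  set f : ℝ → ℝ := fun t => 2 * t * Real.cos t - (2 - t ^ 2) * Real.sin t with hf
  have hderiv : ∀ t : ℝ, HasDerivAt f (t ^ 2 * Real.cos t) t := by
    intro t
    have h1 : HasDerivAt (fun t : ℝ => 2 * t * Real.cos t)
        (2 * Real.cos t + 2 * t * (-Real.sin t)) t := by
      have := ((hasDerivAt_id' t).const_mul (2 : ℝ)).mul (Real.hasDerivAt_cos t)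
      exact this.congr_deriv (by ring)
    have h2 : HasDerivAt (fun t : ℝ => (2 - t ^ 2) * Real.sin t)
        ((0 - 2 * t) * Real.sin t + (2 - t ^ 2) * Real.cos t) t := by
      have hp : HasDerivAt (fun t : ℝ => 2 - t ^ 2) (0 - 2 * t) t := by
        exact (hasDerivAt_const t (2 : ℝ)).sub
          ((hasDerivAt_pow 2 t).congr_deriv (by ring))
      exact hp.mul (Real.hasDerivAt_sin t)
    have := h1.sub h2
    exact this.congr_deriv (by ring)
  have hmono : MonotoneOn f (Set.Icc 0 (Real.sqrt 2)) := by
    apply monotoneOn_of_deriv_nonneg (convex_Icc _ _)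
    · exact (Continuous.continuousOn (by
        fun_prop))
    · intro t ht
      exact (hderiv t).differentiableAt.differentiableWithinAt
    · intro t ht
      rw [interior_Icc] at ht
      rw [(hderiv t).deriv]
      have hcos : 0 < Real.cos t := by
        apply Real.cos_pos_of_mem_Ioo
        constructor
        · linarith [Real.pi_gt_three, ht.1]
        · have := Real.pi_gt_three
          calc t < Real.sqrt 2 := ht.2
            _ < 1.5 := hsqrt
            _ < π / 2 := by linarith
      positivity
  have h0 : f 0 ≤ f x := by
    apply hmono (Set.mem_Icc.mpr ⟨le_refl 0, Real.sqrt_nonneg 2⟩)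
      (Set.mem_Icc.mpr ⟨le_of_lt hx0, le_of_lt hx⟩) (le_of_lt hx0)
  simp only [hf] at h0
  norm_num at h0
  rw [div_mul_eq_mul_div, div_mul_eq_mul_div, le_div_iff₀ hpos]
  nlinarith [h0]
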